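/- Fix 1 < p, q < ∞ with 1/p + 1/q = 1, r ∈ ℕ with r ≥ 2, M = ⌊log₂ r⌋, α with α^M = r^(1/p), and s = r^(1/p). If α^(-4) ≤ ‖J_m x‖_p ≤ 1 for all 0 ≤ m < M, where x ∈ N_α, then |x|_{p,r} ≤ Σ_{m=1}^{M} α^(-m) + Σ_{m=0}^{M-1} α^(-m(p-1)) ≤ 6(p+q). -/

import Mathlib

open scoped BigOperators Classical

def TsirelsonModClosed (q : ℝ) (r : ℕ) (S : Set (ℕ →₀ ℝ)) : Prop :=
  (∀ n : ℕ, Finsupp.single n 1 ∈ S ∧ Finsupp.single n (-1) ∈ S) ∧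
  ∀ (l : ℕ) (z : Fin l → ℕ →₀ ℝ), 1 ≤ l → l ≤ r → (∀ i, z i ∈ S) →
    (∀ i j : Fin l, i ≠ j → Disjoint (z i).support (z j).support) →
    ((r : ℝ) ^ (-(1 / q) : ℝ)) • (∑ i, z i) ∈ S

def KMqr (q : ℝ) (r : ℕ) : Set (ℕ →₀ ℝ) := ⋂₀ {S | TsirelsonModClosed q r S}

/-- The modified Tsirelson-type norm `|x|_{p,r}`. -/
noncomputable def modifiedNorm (q : ℝ) (r : ℕ) (x : ℕ →₀ ℝ) : ℝ :=
  sSup ((fun y => ∑ i ∈ x.support, x i * y i) '' KMqr q r)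

/-- The `ℓ_p` norm of a finitely supported sequence. -/
noncomputable def lpNorm (p : ℝ) (x : ℕ →₀ ℝ) : ℝ :=
  (∑ i ∈ x.support, |x i| ^ p) ^ (1 / p : ℝ)

/-- Finitely supported sequences all of whose coordinates lie in
`C_α = {± α^j : j ∈ ℤ} ∪ {0}`. -/
def Nset (α : ℝ) : Set (ℕ →₀ ℝ) := {x | ∀ i, x i ≠ 0 → ∃ j : ℤ, |x i| = α ^ j}

/-- `J_m x` : the restriction of `x` to the coordinates `i` with
`α^{-m}·x(i) ∈ C_s`. -/
noncomputable def Jpart (α s : ℝ) (m : ℕ) (x : ℕ →₀ ℝ) : ℕ →₀ ℝ :=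
  x.filter (fun i => ∃ j : ℤ, |x i| = α ^ (m : ℤ) * s ^ j)

namespace RightEstAux

noncomputable def pairing (z y : ℕ →₀ ℝ) : ℝ := ∑ i ∈ z.support, z i * y i

noncomputable def ep (p : ℝ) (z : ℕ →₀ ℝ) : ℝ := ∑ i ∈ z.support, |z i| ^ p

lemma ep_nonneg (p : ℝ) (z : ℕ →₀ ℝ) : 0 ≤ ep p z :=
  Finset.sum_nonneg fun _ _ => Real.rpow_nonneg (abs_nonneg _) _

lemma abs_le_ep_rpow {p : ℝ} (hp : 0 < p) (z : ℕ →₀ ℝ) (n : ℕ) :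
    |z n| ≤ (ep p z) ^ (1 / p : ℝ) := by
  by_cases h : z n = 0
  · rw [h, abs_zero]
    exact Real.rpow_nonneg (ep_nonneg p z) _
  · have hmem : n ∈ z.support := Finsupp.mem_support_iff.mpr h
    have h1 : |z n| ^ (p : ℝ) ≤ ep p z :=
      Finset.single_le_sum (fun i _ => Real.rpow_nonneg (abs_nonneg _) _) hmem
    have h2 : (|z n| ^ (p : ℝ)) ^ (1/p : ℝ) ≤ (ep p z) ^ (1/p : ℝ) :=
      Real.rpow_le_rpow (Real.rpow_nonneg (abs_nonneg _) _) h1 (by positivity)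
    rw [one_div] at h2 ⊢
    rwa [Real.rpow_rpow_inv (abs_nonneg _) hp.ne'] at h2

lemma pairing_single (z : ℕ →₀ ℝ) (n : ℕ) (e : ℝ) :
    pairing z (Finsupp.single n e) = z n * e := by
  unfold pairing
  by_cases h : n ∈ z.support
  · rw [Finset.sum_eq_single n]
    · simp
    · intro i _ hne
      rw [Finsupp.single_eq_of_ne' (Ne.symm hne), mul_zero]
    · intro h'; exact absurd h h'
  · have hz : z n = 0 := Finsupp.notMem_support_iff.mp h
    rw [hz, zero_mul]
    apply Finset.sum_eq_zero
    intro i hi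
    have hne : i ≠ n := fun hin => h (hin ▸ hi)
    rw [Finsupp.single_eq_of_ne' (Ne.symm hne), mul_zero]

lemma pairing_filter_eq (z : ℕ →₀ ℝ) (y : ℕ →₀ ℝ) :
    pairing (z.filter fun i => y i ≠ 0) y = ∑ i ∈ z.support, z i * y i := by
  unfold pairing
  rw [Finsupp.support_filter]
  calc ∑ i ∈ z.support.filter (fun i => y i ≠ 0), (z.filter fun i => y i ≠ 0) i * y i
      = ∑ i ∈ z.support.filter (fun i => y i ≠ 0), z i * y i := by
        refine Finset.sum_congr rfl fun i hi => ?_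
        have hp := (Finset.mem_filter.mp hi).2
        simp only [Finsupp.filter_apply, if_pos hp]
    _ = ∑ i ∈ z.support, z i * y i :=
        Finset.sum_filter_of_ne (fun i _ hne hw0 => hne (by rw [hw0, mul_zero]))

lemma pairing_smul_sum (θ : ℝ) (z : ℕ →₀ ℝ) {l : ℕ} (w : Fin l → ℕ →₀ ℝ) :
    pairing z (θ • ∑ k, w k) = θ * ∑ k, pairing (z.filter fun i => w k i ≠ 0) (w k) := by
  have h1 : ∀ i, (θ • ∑ k, w k) i = θ * ∑ k, w k i := by
    intro i
    rw [Finsupp.smul_apply, Finsupp.finset_sum_apply]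
    simp
  calc pairing z (θ • ∑ k, w k)
      = ∑ i ∈ z.support, ∑ k, θ * (z i * w k i) := by
        unfold pairing
        refine Finset.sum_congr rfl fun i _ => ?_
        rw [h1, Finset.mul_sum, Finset.mul_sum]
        exact Finset.sum_congr rfl fun k _ => by ring
    _ = ∑ k, ∑ i ∈ z.support, θ * (z i * w k i) := Finset.sum_comm
    _ = θ * ∑ k, ∑ i ∈ z.support, z i * w k i := by
        rw [Finset.mul_sum]
        exact Finset.sum_congr rfl fun k _ => (Finset.mul_sum _ _ _).symm
    _ = θ * ∑ k, pairing (z.filter fun i => w k i ≠ 0) (w k) := by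
        congr 1
        exact Finset.sum_congr rfl fun k _ => (pairing_filter_eq z (w k)).symm

lemma sum_ep_le (p : ℝ) {l : ℕ} (w : Fin l → ℕ →₀ ℝ)
    (hdisj : ∀ i j : Fin l, i ≠ j → Disjoint (w i).support (w j).support)
    (z : ℕ →₀ ℝ) :
    ∑ k, ep p (z.filter fun i => w k i ≠ 0) ≤ ep p z := by
  have hfil : ∀ k : Fin l, ep p (z.filter fun i => w k i ≠ 0)
      = ∑ i ∈ z.support, if w k i ≠ 0 then |z i| ^ p else 0 := by
    intro k
    unfold ep
    rw [Finsupp.support_filter, Finset.sum_filter]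
    refine Finset.sum_congr rfl fun i _ => ?_
    by_cases h : w k i ≠ 0
    · rw [if_pos h]; simp [Finsupp.filter_apply, h]
    · simp only [if_neg h]
  calc (∑ k, ep p (z.filter fun i => w k i ≠ 0))
      = ∑ k, ∑ i ∈ z.support, (if w k i ≠ 0 then |z i| ^ p else 0) :=
        Finset.sum_congr rfl fun k _ => hfil k
    _ = ∑ i ∈ z.support, ∑ k, (if w k i ≠ 0 then |z i| ^ p else 0) := Finset.sum_comm
    _ ≤ ∑ i ∈ z.support, |z i| ^ p := by
        refine Finset.sum_le_sum fun i _ => ?_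
        by_cases hex : ∃ k, w k i ≠ 0
        · obtain ⟨k0, hk0⟩ := hex
          have hothers : ∀ k ∈ (Finset.univ : Finset (Fin l)), k ≠ k0 →
              (if w k i ≠ 0 then |z i| ^ (p:ℝ) else 0) = 0 := by
            intro k _ hk
            rw [if_neg]
            intro hne
            exact Finset.disjoint_left.mp (hdisj k k0 hk)
              (Finsupp.mem_support_iff.mpr hne) (Finsupp.mem_support_iff.mpr hk0)
          rw [Finset.sum_eq_single_of_mem k0 (Finset.mem_univ _) hothers, if_pos hk0]
        · push_neg at hex
          rw [Finset.sum_eq_zero (fun k _ => by simp [hex k])]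
          positivity

lemma holder {p q : ℝ} (hp : 1 < p) (hpq : 1/p + 1/q = 1) {l : ℕ} (hl : 1 ≤ l)
    (u : Fin l → ℝ) (hu : ∀ k, 0 ≤ u k) :
    ∑ k, u k ≤ (l : ℝ) ^ (1/q : ℝ) * (∑ k, (u k) ^ (p : ℝ)) ^ (1/p : ℝ) := by
  have hl0 : (0:ℝ) < l := by exact_mod_cast hl
  have key := Real.arith_mean_le_rpow_mean (s := (Finset.univ : Finset (Fin l)))
    (fun _ => 1/(l:ℝ)) u (fun i _ => by positivity)
    (by rw [Finset.sum_const, Finset.card_univ, Fintype.card_fin, nsmul_eq_mul]; field_simp)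
    (fun i _ => hu i) hp.le
  have h1 : ∑ k : Fin l, (1/(l:ℝ)) * u k = (1/(l:ℝ)) * ∑ k, u k := by
    rw [Finset.mul_sum]
  have h2 : ∑ k : Fin l, (1/(l:ℝ)) * (u k) ^ (p:ℝ) = (1/(l:ℝ)) * ∑ k, (u k) ^ (p:ℝ) := by
    rw [Finset.mul_sum]
  rw [h1, h2] at key
  have h3 : ((1/(l:ℝ)) * ∑ k, (u k) ^ (p:ℝ)) ^ (1/p : ℝ)
      = (1/(l:ℝ)) ^ (1/p:ℝ) * (∑ k, (u k) ^ (p:ℝ)) ^ (1/p : ℝ) :=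
    Real.mul_rpow (by positivity) (Finset.sum_nonneg fun k _ => Real.rpow_nonneg (hu k) _)
  rw [h3] at key
  have e1 : (1/(l:ℝ)) ^ (1/p:ℝ) = (l:ℝ) ^ (-(1/p) : ℝ) := by
    rw [one_div (l:ℝ), Real.inv_rpow hl0.le, ← Real.rpow_neg hl0.le]
  have h5 : (l:ℝ) * (1/(l:ℝ)) ^ (1/p:ℝ) = (l:ℝ) ^ (1/q : ℝ) := by
    calc (l:ℝ) * (1/(l:ℝ)) ^ (1/p:ℝ) = (l:ℝ)^(1:ℝ) * (l:ℝ)^(-(1/p):ℝ) := by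
          rw [e1, Real.rpow_one]
      _ = (l:ℝ) ^ (1 + -(1/p) : ℝ) := (Real.rpow_add hl0 _ _).symm
      _ = (l:ℝ) ^ (1/q : ℝ) := by congr 1; linarith
  calc ∑ k, u k = (l:ℝ) * ((1/(l:ℝ)) * ∑ k, u k) := by field_simp
    _ ≤ (l:ℝ) * ((1/(l:ℝ)) ^ (1/p:ℝ) * (∑ k, (u k) ^ (p:ℝ)) ^ (1/p : ℝ)) :=
        mul_le_mul_of_nonneg_left key hl0.le
    _ = ((l:ℝ) * (1/(l:ℝ)) ^ (1/p:ℝ)) * (∑ k, (u k) ^ (p:ℝ)) ^ (1/p : ℝ) := by ring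
    _ = (l : ℝ) ^ (1/q : ℝ) * (∑ k, (u k) ^ (p:ℝ)) ^ (1/p : ℝ) := by rw [h5]

def GoodE (p : ℝ) (y : ℕ →₀ ℝ) : Prop :=
  ∀ z : ℕ →₀ ℝ, pairing z y ≤ (ep p z) ^ (1/p : ℝ)

def GoodL (p s t : ℝ) (y : ℕ →₀ ℝ) : Prop :=
  ∀ c : ℝ, 0 < c → ∀ z : ℕ →₀ ℝ, (∀ i, z i ≠ 0 → ∃ j : ℕ, |z i| = c / s ^ j) →
    pairing z y ≤ c + ep p z / (t * c ^ (p - 1 : ℝ))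

lemma good_closed {p q : ℝ} (hp : 1 < p) (hq : 1 < q) (hpq : 1/p + 1/q = 1)
    {r : ℕ} (hr : 2 ≤ r) :
    TsirelsonModClosed q r
      {y | GoodE p y ∧ GoodL p ((r:ℝ) ^ (1/p : ℝ)) ((r:ℝ) ^ (1/q : ℝ)) y} := by
  set s : ℝ := (r:ℝ) ^ (1/p:ℝ) with hs
  set t : ℝ := (r:ℝ) ^ (1/q:ℝ) with ht
  have hp0 : 0 < p := lt_trans one_pos hp
  have hq0 : 0 < q := lt_trans one_pos hq
  have hr1 : (1:ℝ) < (r:ℝ) := by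
    have h : (2:ℝ) ≤ (r:ℝ) := by exact_mod_cast hr
    linarith
  have hr0 : (0:ℝ) < (r:ℝ) := lt_trans one_pos hr1
  have hs1 : 1 < s := (Real.one_lt_rpow_iff_of_pos hr0).mpr (Or.inl ⟨hr1, by positivity⟩)
  have ht1 : 1 < t := (Real.one_lt_rpow_iff_of_pos hr0).mpr (Or.inl ⟨hr1, by positivity⟩)
  have hs0 : 0 < s := lt_trans one_pos hs1
  have ht0 : 0 < t := lt_trans one_pos ht1
  have hθ : (r:ℝ) ^ (-(1/q):ℝ) = t⁻¹ := by
    rw [Real.rpow_neg hr0.le, ← ht]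
  have hθ0 : (0:ℝ) < (r:ℝ) ^ (-(1/q):ℝ) := Real.rpow_pos_of_pos hr0 _
  have hθr : (r:ℝ) ^ (-(1/q):ℝ) * (r:ℝ) = s := by
    have h1 : (r:ℝ) ^ (-(1/q):ℝ) * (r:ℝ)^(1:ℝ) = (r:ℝ) ^ ((-(1/q))+1:ℝ) :=
      (Real.rpow_add hr0 _ _).symm
    rw [Real.rpow_one] at h1
    rw [h1, hs]
    congr 1
    linarith
  have hst : s ^ (p-1:ℝ) = t := by
    rw [hs, ht, ← Real.rpow_mul hr0.le]
    congr 1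
    have h1 : 1/q = 1 - 1/p := by linarith
    rw [h1]
    field_simp
  constructor
  · -- singles
    intro n
    have key : ∀ e : ℝ, |e| = 1 →
        (Finsupp.single n e) ∈ {y | GoodE p y ∧ GoodL p s t y} := by
      intro e he
      have hb : ∀ z : ℕ →₀ ℝ, pairing z (Finsupp.single n e) ≤ |z n| := by
        intro z
        rw [pairing_single]
        calc z n * e ≤ |z n * e| := le_abs_self _
          _ = |z n| := by rw [abs_mul, he, mul_one]
      constructor
      · intro z; exact (hb z).trans (abs_le_ep_rpow hp0 z n)
      · intro c hc z hz
        have h1 : |z n| ≤ c := by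
          by_cases h : z n = 0
          · rw [h, abs_zero]; exact hc.le
          · obtain ⟨j, hj⟩ := hz n h
            rw [hj]
            exact div_le_self hc.le (one_le_pow₀ hs1.le)
        have h2 : 0 ≤ ep p z / (t * c ^ (p-1:ℝ)) :=
          div_nonneg (ep_nonneg p z) (by positivity)
        exact (hb z).trans (h1.trans (le_add_of_nonneg_right h2))
    exact ⟨key 1 (by norm_num), key (-1) (by norm_num)⟩
  · -- combination
    intro l w hl hlr hw hdisj
    have hθle : ((l:ℝ)) ≤ (r:ℝ) := by exact_mod_cast hlr
    refine ⟨?_, ?_⟩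
    · -- GoodE
      intro z
      rw [pairing_smul_sum]
      have hunn : ∀ k : Fin l, (0:ℝ) ≤ (ep p (z.filter fun i => w k i ≠ 0)) ^ (1/p:ℝ) :=
        fun k => Real.rpow_nonneg (ep_nonneg _ _) _
      have hb : ∀ k : Fin l, pairing (z.filter fun i => w k i ≠ 0) (w k)
          ≤ (ep p (z.filter fun i => w k i ≠ 0)) ^ (1/p:ℝ) := fun k => (hw k).1 _
      have hup : ∀ k : Fin l, ((ep p (z.filter fun i => w k i ≠ 0)) ^ (1/p:ℝ)) ^ (p:ℝ)
          = ep p (z.filter fun i => w k i ≠ 0) := by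
        intro k
        rw [one_div, Real.rpow_inv_rpow (ep_nonneg _ _) hp0.ne']
      have hsum_nonneg : (0:ℝ) ≤ ∑ k : Fin l,
          ((ep p (z.filter fun i => w k i ≠ 0)) ^ (1/p:ℝ)) ^ (p:ℝ) :=
        Finset.sum_nonneg fun k _ => Real.rpow_nonneg (hunn k) _
      calc (r:ℝ)^(-(1/q):ℝ) * ∑ k, pairing (z.filter fun i => w k i ≠ 0) (w k)
          ≤ (r:ℝ)^(-(1/q):ℝ) * ∑ k, (ep p (z.filter fun i => w k i ≠ 0)) ^ (1/p:ℝ) :=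
            mul_le_mul_of_nonneg_left (Finset.sum_le_sum fun k _ => hb k) hθ0.le
        _ ≤ (r:ℝ)^(-(1/q):ℝ) * ((l:ℝ)^(1/q:ℝ) *
              (∑ k, ((ep p (z.filter fun i => w k i ≠ 0)) ^ (1/p:ℝ)) ^ (p:ℝ)) ^ (1/p:ℝ)) :=
            mul_le_mul_of_nonneg_left (holder hp hpq hl _ hunn) hθ0.le
        _ ≤ (r:ℝ)^(-(1/q):ℝ) * ((r:ℝ)^(1/q:ℝ) * (ep p z)^(1/p:ℝ)) := by
            have h1 : ((l:ℝ))^(1/q:ℝ) ≤ (r:ℝ)^(1/q:ℝ) :=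
              Real.rpow_le_rpow (Nat.cast_nonneg l) hθle (by positivity)
            have h2 : (∑ k, ((ep p (z.filter fun i => w k i ≠ 0)) ^ (1/p:ℝ)) ^ (p:ℝ)) ≤ ep p z := by
              rw [Finset.sum_congr rfl fun k _ => hup k]
              exact sum_ep_le p w hdisj z
            have h3 : (∑ k, ((ep p (z.filter fun i => w k i ≠ 0)) ^ (1/p:ℝ)) ^ (p:ℝ)) ^ (1/p:ℝ)
                ≤ (ep p z)^(1/p:ℝ) :=
              Real.rpow_le_rpow hsum_nonneg h2 (by positivity)
            have h4 : (0:ℝ) ≤ (∑ k, ((ep p (z.filter fun i => w k i ≠ 0)) ^ (1/p:ℝ)) ^ (p:ℝ)) ^ (1/p:ℝ) :=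
              Real.rpow_nonneg hsum_nonneg _
            apply mul_le_mul_of_nonneg_left _ hθ0.le
            calc ((l:ℝ))^(1/q:ℝ) * (∑ k, ((ep p (z.filter fun i => w k i ≠ 0)) ^ (1/p:ℝ)) ^ (p:ℝ)) ^ (1/p:ℝ)
                ≤ (r:ℝ)^(1/q:ℝ) * (∑ k, ((ep p (z.filter fun i => w k i ≠ 0)) ^ (1/p:ℝ)) ^ (p:ℝ)) ^ (1/p:ℝ) :=
                  mul_le_mul_of_nonneg_right h1 h4
              _ ≤ (r:ℝ)^(1/q:ℝ) * (ep p z)^(1/p:ℝ) :=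
                  mul_le_mul_of_nonneg_left h3 (Real.rpow_nonneg hr0.le _)
        _ = (ep p z)^(1/p:ℝ) := by
            rw [← mul_assoc, ← Real.rpow_add hr0]
            rw [show (-(1/q) + 1/q : ℝ) = 0 by ring, Real.rpow_zero, one_mul]
    · -- GoodL
      intro c hc z hz
      rw [pairing_smul_sum]
      have key : ∀ k : Fin l, pairing (z.filter fun i => w k i ≠ 0) (w k)
          ≤ c / s + ep p (z.filter fun i => w k i ≠ 0) / c ^ (p-1:ℝ) := by
        intro k
        set zk := z.filter (fun i => w k i ≠ 0) with hzk
        have hzk_app : ∀ i, zk i ≠ 0 → zk i = z i ∧ z i ≠ 0 := by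
          intro i hi
          have hpred : w k i ≠ 0 := by
            by_contra hcon
            exact hi (by rw [hzk]; simp [Finsupp.filter_apply, hcon])
          have h1 : zk i = z i := by rw [hzk]; simp [Finsupp.filter_apply, hpred]
          exact ⟨h1, h1 ▸ hi⟩
        by_cases hbig : ∃ i, zk i ≠ 0 ∧ c ≤ |z i|
        · obtain ⟨i0, hi0, hci0⟩ := hbig
          have hmem : i0 ∈ zk.support := Finsupp.mem_support_iff.mpr hi0
          have hA : c ^ (p:ℝ) ≤ ep p zk := by
            calc c ^ (p:ℝ) ≤ |zk i0| ^ (p:ℝ) := by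
                  apply Real.rpow_le_rpow hc.le _ hp0.le
                  rw [(hzk_app i0 hi0).1]
                  exact hci0
              _ ≤ ep p zk :=
                  Finset.single_le_sum (fun i _ => Real.rpow_nonneg (abs_nonneg _) _) hmem
          have hA0 : 0 < ep p zk := lt_of_lt_of_le (Real.rpow_pos_of_pos hc _) hA
          have h2 : (ep p zk) ^ (1/p:ℝ) ≤ ep p zk / c ^ (p-1:ℝ) := by
            rw [le_div_iff₀ (by positivity)]
            have hcp : c ^ (p-1:ℝ) ≤ (ep p zk) ^ ((p-1)/p : ℝ) := by
              have h3 := Real.rpow_le_rpow (z := (p-1)/p) (Real.rpow_nonneg hc.le p) hA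
                (div_nonneg (by linarith : (0:ℝ) ≤ p - 1) hp0.le)
              rwa [← Real.rpow_mul hc.le, show (p * ((p-1)/p) : ℝ) = p - 1 by field_simp] at h3
            calc (ep p zk)^(1/p:ℝ) * c^(p-1:ℝ)
                ≤ (ep p zk)^(1/p:ℝ) * (ep p zk)^((p-1)/p:ℝ) :=
                  mul_le_mul_of_nonneg_left hcp (Real.rpow_nonneg hA0.le _)
              _ = ep p zk := by
                  rw [← Real.rpow_add hA0, show (1/p + (p-1)/p : ℝ) = 1 by field_simp; ring,
                    Real.rpow_one]
          calc pairing zk (w k) ≤ (ep p zk)^(1/p:ℝ) := (hw k).1 zk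
            _ ≤ ep p zk / c^(p-1:ℝ) := h2
            _ ≤ c/s + ep p zk / c^(p-1:ℝ) := le_add_of_nonneg_left (by positivity)
        · push_neg at hbig
          have hlat : ∀ i, zk i ≠ 0 → ∃ j : ℕ, |zk i| = (c/s) / s ^ j := by
            intro i hi
            obtain ⟨hzi, hzne⟩ := hzk_app i hi
            obtain ⟨j, hj⟩ := hz i hzne
            have hlt : |z i| < c := hbig i hi
            cases j with
            | zero => rw [pow_zero, div_one] at hj; exact absurd hj (ne_of_lt hlt)
            | succ j' =>
              refine ⟨j', ?_⟩
              rw [hzi, hj, div_div, ← pow_succ']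
          have hres := (hw k).2 (c/s) (by positivity) zk hlat
          have heq : t * ((c/s) ^ (p-1:ℝ)) = c ^ (p-1:ℝ) := by
            rw [Real.div_rpow hc.le hs0.le, hst]
            field_simp
          rw [heq] at hres
          exact hres
      calc (r:ℝ)^(-(1/q):ℝ) * ∑ k, pairing (z.filter fun i => w k i ≠ 0) (w k)
          ≤ (r:ℝ)^(-(1/q):ℝ) *
              ∑ k, (c/s + ep p (z.filter fun i => w k i ≠ 0) / c^(p-1:ℝ)) :=
            mul_le_mul_of_nonneg_left (Finset.sum_le_sum fun k _ => key k) hθ0.le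
        _ = (r:ℝ)^(-(1/q):ℝ) *
              ((l:ℝ)*(c/s) + (∑ k, ep p (z.filter fun i => w k i ≠ 0)) / c^(p-1:ℝ)) := by
            rw [Finset.sum_add_distrib, Finset.sum_const, Finset.card_univ, Fintype.card_fin,
              nsmul_eq_mul, Finset.sum_div]
        _ ≤ (r:ℝ)^(-(1/q):ℝ) * ((r:ℝ)*(c/s) + (ep p z) / c^(p-1:ℝ)) := by
            apply mul_le_mul_of_nonneg_left _ hθ0.le
            apply add_le_add
            · exact mul_le_mul_of_nonneg_right hθle (by positivity)
            · exact (div_le_div_iff_of_pos_right (by positivity)).mpr (sum_ep_le p w hdisj z)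
        _ = c + ep p z / (t * c^(p-1:ℝ)) := by
            rw [mul_add, ← mul_assoc, hθr]
            congr 1
            · field_simp
            · rw [hθ, inv_mul_eq_div, div_div, mul_comm (c^(p-1:ℝ)) t]

lemma geom_bound {x : ℝ} (h0 : 0 ≤ x) (h1 : x < 1) (n : ℕ) :
    ∑ i ∈ Finset.range n, x ^ i ≤ 1 / (1 - x) := by
  have hne : x ≠ 1 := ne_of_lt h1
  rw [geom_sum_eq hne]
  have key : (x^n - 1)/(x-1) = (1 - x^n)/(1-x) := by
    rw [div_eq_div_iff (sub_ne_zero.mpr hne) (by intro h; apply hne; linarith)]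
    ring
  rw [key]
  have hxn : 0 ≤ x ^ n := pow_nonneg h0 n
  exact div_le_div₀ zero_le_one (by linarith) (by linarith) le_rfl

lemma mem_good {p q : ℝ} (hp : 1 < p) (hq : 1 < q) (hpq : 1/p + 1/q = 1)
    {r : ℕ} (hr : 2 ≤ r) {y : ℕ →₀ ℝ} (hy : y ∈ KMqr q r) :
    GoodE p y ∧ GoodL p ((r:ℝ) ^ (1/p:ℝ)) ((r:ℝ) ^ (1/q:ℝ)) y :=
  Set.mem_sInter.mp hy _ (good_closed hp hq hpq hr)

end RightEstAux

set_option maxHeartbeats 2000000 in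
open RightEstAux in
theorem right_estimate (p q : ℝ) (hp : 1 < p) (hq : 1 < q)
    (hpq : 1 / p + 1 / q = 1) (r : ℕ) (hr : 2 ≤ r)
    (M : ℕ) (hM : M = Nat.log 2 r)
    (α : ℝ) (hα : 0 < α) (hαM : α ^ M = (r : ℝ) ^ (1 / p : ℝ))
    (s : ℝ) (hs : s = (r : ℝ) ^ (1 / p : ℝ))
    (x : ℕ →₀ ℝ) (hx : x ∈ Nset α)
    (hJlo : ∀ m < M, α ^ (-4 : ℤ) ≤ lpNorm p (Jpart α s m x))
    (hJhi : ∀ m < M, lpNorm p (Jpart α s m x) ≤ 1) :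
    modifiedNorm q r x ≤
        (∑ m ∈ Finset.Icc 1 M, α ^ (-(m : ℝ))) +
          ∑ m ∈ Finset.range M, α ^ (-(m : ℝ) * (p - 1)) ∧
      (∑ m ∈ Finset.Icc 1 M, α ^ (-(m : ℝ))) +
          (∑ m ∈ Finset.range M, α ^ (-(m : ℝ) * (p - 1))) ≤ 6 * (p + q) := by
  classical
  have hp0 : 0 < p := lt_trans one_pos hp
  have hq0 : 0 < q := lt_trans one_pos hq
  have hr1 : (1:ℝ) < (r:ℝ) := by
    have h : (2:ℝ) ≤ (r:ℝ) := by exact_mod_cast hr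
    linarith
  have hr0 : (0:ℝ) < (r:ℝ) := lt_trans one_pos hr1
  have hM1 : 1 ≤ M := by rw [hM]; exact Nat.log_pos (by norm_num) hr
  have hα1 : 1 < α := by
    by_contra hcon
    push_neg at hcon
    have h1 : α ^ M ≤ 1 := pow_le_one₀ hα.le hcon
    have h2 : 1 < (r:ℝ) ^ (1/p:ℝ) :=
      (Real.one_lt_rpow_iff_of_pos hr0).mpr (Or.inl ⟨hr1, by positivity⟩)
    rw [hαM] at h1
    linarith
  have hsα : s = α ^ M := by rw [hs, ← hαM]
  -- zpow exponent arithmetic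
  have hαs : ∀ (m : ℕ) (j : ℤ), α ^ (m:ℤ) * s ^ j = α ^ ((m:ℤ) + (M:ℤ) * j) := by
    intro m j
    rw [hsα, ← zpow_natCast α M, ← zpow_mul, ← zpow_add₀ (ne_of_gt hα)]
  have hzpow_inj : ∀ a b : ℤ, α ^ a = α ^ b → a = b := by
    intro a b hab
    have h1 : ∀ u v : ℤ, α ^ u ≤ α ^ v → u ≤ v := by
      intro u v huv
      rw [← Real.rpow_intCast α u, ← Real.rpow_intCast α v] at huv
      exact_mod_cast (Real.rpow_le_rpow_left_iff hα1).mp huv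
    exact le_antisymm (h1 a b hab.le) (h1 b a hab.ge)
  have hcover : ∀ i ∈ x.support, ∃ m, m ∈ Finset.range M ∧
      (∃ j : ℤ, |x i| = α ^ (m:ℤ) * s ^ j) := by
    intro i hi
    obtain ⟨j', hj'⟩ := hx i (Finsupp.mem_support_iff.mp hi)
    have hMz : (0:ℤ) < (M:ℤ) := by exact_mod_cast hM1
    have h2 : 0 ≤ j' % (M:ℤ) := Int.emod_nonneg _ (ne_of_gt hMz)
    refine ⟨(j' % (M:ℤ)).toNat, ?_, j' / (M:ℤ), ?_⟩
    · rw [Finset.mem_range]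
      have h1 : j' % (M:ℤ) < (M:ℤ) := Int.emod_lt_of_pos _ hMz
      omega
    · rw [hαs, hj']
      congr 1
      rw [Int.toNat_of_nonneg h2]
      exact (Int.emod_add_mul_ediv j' (M:ℤ)).symm
  have huniq : ∀ i, x i ≠ 0 → ∀ m m' : ℕ, m < M → m' < M →
      (∃ j : ℤ, |x i| = α ^ (m:ℤ) * s ^ j) →
      (∃ j : ℤ, |x i| = α ^ (m':ℤ) * s ^ j) → m = m' := by
    intro i _ m m' hm hm' h1 h2
    obtain ⟨j, hj⟩ := h1
    obtain ⟨j'', hj''⟩ := h2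
    rw [hαs] at hj hj''
    have he : (m:ℤ) + (M:ℤ)*j = (m':ℤ) + (M:ℤ)*j'' := hzpow_inj _ _ (hj ▸ hj'')
    have hmM : (m:ℤ) < (M:ℤ) := by exact_mod_cast hm
    have hm'M : (m':ℤ) < (M:ℤ) := by exact_mod_cast hm'
    have hm0 : (0:ℤ) ≤ (m:ℤ) := Int.ofNat_nonneg m
    have hm'0 : (0:ℤ) ≤ (m':ℤ) := Int.ofNat_nonneg m'
    have hMz : (0:ℤ) < (M:ℤ) := by exact_mod_cast hM1
    have hd : j'' - j = 0 := by
      by_contra hd0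
      rcases lt_or_gt_of_ne hd0 with h | h
      · have h3 : j'' - j ≤ -1 := by omega
        have h4 : (M:ℤ) * (j'' - j) ≤ (M:ℤ) * (-1) :=
          mul_le_mul_of_nonneg_left h3 hMz.le
        have h5 : (m:ℤ) - m' = (M:ℤ) * (j'' - j) := by linarith [he]
        nlinarith
      · have h3 : 1 ≤ j'' - j := by omega
        have h4 : (M:ℤ) * 1 ≤ (M:ℤ) * (j'' - j) :=
          mul_le_mul_of_nonneg_left h3 hMz.le
        have h5 : (m:ℤ) - m' = (M:ℤ) * (j'' - j) := by linarith [he]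
        nlinarith
    have : (m:ℤ) = (m':ℤ) := by
      have h5 : (m:ℤ) - m' = (M:ℤ) * (j'' - j) := by linarith [he]
      rw [hd, mul_zero] at h5
      linarith
    exact_mod_cast this
  -- splitting the pairing
  have hJm : ∀ (m : ℕ) (y : ℕ →₀ ℝ), pairing (Jpart α s m x) y
      = ∑ i ∈ x.support, if (∃ j : ℤ, |x i| = α ^ (m:ℤ) * s ^ j) then x i * y i else 0 := by
    intro m y
    unfold pairing Jpart
    rw [Finsupp.support_filter, Finset.sum_filter]
    refine Finset.sum_congr rfl fun i _ => ?_
    by_cases h : (∃ j : ℤ, |x i| = α ^ (m:ℤ) * s ^ j)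
    · rw [if_pos h, if_pos h]
      congr 1
      exact Finsupp.filter_apply_pos _ _ h
    · rw [if_neg h, if_neg h]
  have hsplit : ∀ y : ℕ →₀ ℝ,
      pairing x y = ∑ m ∈ Finset.range M, pairing (Jpart α s m x) y := by
    intro y
    calc pairing x y
        = ∑ i ∈ x.support, ∑ m ∈ Finset.range M,
            (if (∃ j : ℤ, |x i| = α ^ (m:ℤ) * s ^ j) then x i * y i else 0) := by
          unfold pairing
          refine Finset.sum_congr rfl fun i hi => ?_
          obtain ⟨m0, hm0, hPm0⟩ := hcover i hi
          rw [Finset.sum_eq_single_of_mem m0 hm0 (fun m hm hne => if_neg (fun hP =>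
            hne (huniq i (Finsupp.mem_support_iff.mp hi) m m0
              (Finset.mem_range.mp hm) (Finset.mem_range.mp hm0) hP hPm0)))]
          rw [if_pos hPm0]
      _ = ∑ m ∈ Finset.range M, ∑ i ∈ x.support,
            (if (∃ j : ℤ, |x i| = α ^ (m:ℤ) * s ^ j) then x i * y i else 0) := Finset.sum_comm
      _ = ∑ m ∈ Finset.range M, pairing (Jpart α s m x) y :=
          Finset.sum_congr rfl fun m _ => (hJm m y).symm
  -- bounds on ep of the pieces
  have hepJ : ∀ m < M, ep p (Jpart α s m x) ≤ 1 := by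
    intro m hm
    have h1 : (ep p (Jpart α s m x)) ^ (1/p : ℝ) ≤ 1 := hJhi m hm
    have h2 : ((ep p (Jpart α s m x)) ^ (1/p : ℝ)) ^ (p:ℝ) = ep p (Jpart α s m x) := by
      rw [one_div, Real.rpow_inv_rpow (ep_nonneg _ _) hp0.ne']
    rw [← h2]
    exact Real.rpow_le_one (Real.rpow_nonneg (ep_nonneg _ _) _) h1 hp0.le
  have habsJ : ∀ m < M, ∀ i, (Jpart α s m x) i ≠ 0 →
      |x i| ≤ 1 ∧ (∃ j : ℤ, |x i| = α ^ (m:ℤ) * s ^ j) ∧ (Jpart α s m x) i = x i := by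
    intro m hm i hi
    have hpred : (∃ j : ℤ, |x i| = α ^ (m:ℤ) * s ^ j) := by
      by_contra h
      exact hi (by unfold Jpart; exact Finsupp.filter_apply_neg _ _ h)
    have happ : (Jpart α s m x) i = x i := by
      unfold Jpart; exact Finsupp.filter_apply_pos _ _ hpred
    have hle : |x i| ≤ 1 := by
      have h1 : |(Jpart α s m x) i| ≤ (ep p (Jpart α s m x)) ^ (1/p:ℝ) :=
        abs_le_ep_rpow hp0 _ i
      have h2 : (ep p (Jpart α s m x)) ^ (1/p:ℝ) ≤ 1 := hJhi m hm
      rw [happ] at h1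
      exact h1.trans h2
    exact ⟨hle, hpred, happ⟩
  -- the per-piece estimate
  have hbound : ∀ y ∈ KMqr q r, ∀ m < M,
      pairing (Jpart α s m x) y ≤ α ^ ((m:ℝ) - (M:ℝ)) + α ^ (-(m:ℝ) * (p-1)) := by
    intro y hy m hm
    obtain ⟨hE, hL⟩ := mem_good hp hq hpq hr hy
    rw [← hs] at hL
    rcases Nat.eq_zero_or_pos m with hm0 | hmpos
    · subst hm0
      have h1 : pairing (Jpart α s 0 x) y ≤ (ep p (Jpart α s 0 x)) ^ (1/p:ℝ) := hE _
      have h2 : (ep p (Jpart α s 0 x)) ^ (1/p:ℝ) ≤ 1 := hJhi 0 hm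
      have h3 : (0:ℝ) < α ^ (((0:ℕ):ℝ) - (M:ℝ)) := Real.rpow_pos_of_pos hα _
      have h4 : α ^ (-(((0:ℕ)):ℝ) * (p-1)) = 1 := by
        rw [show (-(((0:ℕ)):ℝ) * (p-1)) = 0 by push_cast; ring, Real.rpow_zero]
      rw [h4]
      linarith [h1.trans h2]
    · set c : ℝ := α ^ ((m:ℝ) - (M:ℝ)) with hcdef
      have hc : 0 < c := Real.rpow_pos_of_pos hα _
      have hlat : ∀ i, (Jpart α s m x) i ≠ 0 →
          ∃ j : ℕ, |(Jpart α s m x) i| = c / s ^ j := by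
        intro i hi
        obtain ⟨hle, ⟨j, hj⟩, happ⟩ := habsJ m hm i hi
        rw [hαs] at hj
        have hexp : (m:ℤ) + (M:ℤ)*j ≤ 0 := by
          have h1 : α ^ (((m:ℤ) + (M:ℤ)*j : ℤ):ℝ) ≤ α ^ (0:ℝ) := by
            rw [Real.rpow_intCast, Real.rpow_zero, ← hj]
            exact hle
          have h2 := (Real.rpow_le_rpow_left_iff hα1).mp h1
          exact_mod_cast h2
        have hMz : (0:ℤ) < (M:ℤ) := by exact_mod_cast hM1
        have hm1 : (1:ℤ) ≤ (m:ℤ) := by exact_mod_cast hmpos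
        have hmMz : (m:ℤ) < (M:ℤ) := by exact_mod_cast hm
        have hj1 : j + 1 ≤ 0 := by
          by_contra hcon
          push_neg at hcon
          have h0 : 0 ≤ j := by omega
          have hMj : 0 ≤ (M:ℤ)*j := mul_nonneg hMz.le h0
          linarith
        refine ⟨(-(j+1)).toNat, ?_⟩
        have htn : ((-(j+1)).toNat : ℤ) = -(j+1) := Int.toNat_of_nonneg (by omega)
        rw [happ, hj, hcdef, hsα, ← pow_mul,
          ← Real.rpow_natCast α (M * (-(j+1)).toNat), ← Real.rpow_sub hα,
          ← Real.rpow_intCast α ((m:ℤ) + (M:ℤ)*j)]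
        congr 1
        have hnr : (((-(j+1)).toNat : ℕ) : ℝ) = -((j:ℝ)+1) := by
          rw [← Int.cast_natCast, htn]
          push_cast
          ring
        rw [Nat.cast_mul, hnr]
        push_cast
        ring
      have hres := hL c hc (Jpart α s m x) hlat
      have htc : (r:ℝ)^(1/q:ℝ) * c ^ (p-1:ℝ) = α ^ ((m:ℝ)*(p-1)) := by
        have h2 : (r:ℝ) = α ^ ((M:ℝ)*p) := by
          have h3 : (α ^ ((M:ℝ)) : ℝ) = (r:ℝ)^(1/p:ℝ) := by
            rw [Real.rpow_natCast, hαM]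
          have h4 : α ^ ((M:ℝ)*p) = ((r:ℝ)^(1/p:ℝ))^(p:ℝ) := by
            rw [Real.rpow_mul hα.le, h3]
          rw [h4, one_div, Real.rpow_inv_rpow hr0.le hp0.ne']
        have h1 : (r:ℝ)^(1/q:ℝ) = α ^ ((M:ℝ)*(p-1)) := by
          rw [h2, ← Real.rpow_mul hα.le]
          congr 1
          have h5 : 1/q = 1 - 1/p := by linarith
          rw [h5]
          field_simp
        rw [h1, hcdef, ← Real.rpow_mul hα.le, ← Real.rpow_add hα]
        congr 1
        ring
      have hub : ep p (Jpart α s m x) / ((r:ℝ)^(1/q:ℝ) * c ^ (p-1:ℝ)) ≤ α ^ (-(m:ℝ)*(p-1)) := by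
        rw [htc]
        have h6 : ep p (Jpart α s m x) / α^((m:ℝ)*(p-1)) ≤ 1 / α^((m:ℝ)*(p-1)) :=
          (div_le_div_iff_of_pos_right (Real.rpow_pos_of_pos hα _)).mpr (hepJ m hm)
        calc ep p (Jpart α s m x) / α^((m:ℝ)*(p-1)) ≤ 1 / α^((m:ℝ)*(p-1)) := h6
          _ = α ^ (-(m:ℝ)*(p-1)) := by
              rw [one_div, ← Real.rpow_neg hα.le]
              congr 1
              ring
      calc pairing (Jpart α s m x) y
          ≤ c + ep p (Jpart α s m x) / ((r:ℝ)^(1/q:ℝ) * c ^ (p-1:ℝ)) := hres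
        _ ≤ c + α ^ (-(m:ℝ)*(p-1)) := add_le_add_right hub c
  -- reindexing of the first sum
  have hreidx : ∑ m ∈ Finset.range M, α ^ ((m:ℝ) - (M:ℝ))
      = ∑ m ∈ Finset.Icc 1 M, α ^ (-(m:ℝ)) := by
    refine Finset.sum_nbij' (fun m => M - m) (fun m => M - m) ?_ ?_ ?_ ?_ ?_
    · intro a ha
      rw [Finset.mem_range] at ha
      rw [Finset.mem_Icc]
      omega
    · intro a ha
      rw [Finset.mem_Icc] at ha
      rw [Finset.mem_range]
      omega
    · intro a ha
      rw [Finset.mem_range] at ha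
      omega
    · intro a ha
      rw [Finset.mem_Icc] at ha
      omega
    · intro a ha
      rw [Finset.mem_range] at ha
      congr 1
      have : ((M - a : ℕ) : ℝ) = (M:ℝ) - (a:ℝ) := by
        push_cast [Nat.cast_sub ha.le]
        ring
      rw [this]
      ring
  -- first conjunct
  have hB0 : (0:ℝ) ≤ (∑ m ∈ Finset.Icc 1 M, α ^ (-(m : ℝ))) +
      ∑ m ∈ Finset.range M, α ^ (-(m : ℝ) * (p - 1)) := by
    apply add_nonneg <;>
      exact Finset.sum_nonneg fun m _ => (Real.rpow_pos_of_pos hα _).le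
  have hfirst : modifiedNorm q r x ≤
      (∑ m ∈ Finset.Icc 1 M, α ^ (-(m : ℝ))) +
        ∑ m ∈ Finset.range M, α ^ (-(m : ℝ) * (p - 1)) := by
    apply Real.sSup_le _ hB0
    rintro b ⟨y, hy, rfl⟩
    show pairing x y ≤ _
    rw [hsplit y]
    calc ∑ m ∈ Finset.range M, pairing (Jpart α s m x) y
        ≤ ∑ m ∈ Finset.range M, (α ^ ((m:ℝ)-(M:ℝ)) + α ^ (-(m:ℝ)*(p-1))) :=
          Finset.sum_le_sum fun m hm => hbound y hy m (Finset.mem_range.mp hm)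
      _ = (∑ m ∈ Finset.range M, α ^ ((m:ℝ)-(M:ℝ)))
            + ∑ m ∈ Finset.range M, α ^ (-(m:ℝ)*(p-1)) := Finset.sum_add_distrib
      _ = _ := by rw [hreidx]
  -- second conjunct
  have hα2 : (2:ℝ) ^ (1/p:ℝ) ≤ α := by
    have h2M : (2:ℕ) ^ M ≤ r := by rw [hM]; exact Nat.pow_log_le_self 2 (by omega)
    have h2Mr : ((2:ℝ)) ^ (M:ℕ) ≤ (r:ℝ) := by exact_mod_cast h2M
    have h3 : ((2:ℝ) ^ (M:ℕ)) ^ (1/p:ℝ) ≤ (r:ℝ) ^ (1/p:ℝ) :=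
      Real.rpow_le_rpow (by positivity) h2Mr (by positivity)
    have h4 : ((2:ℝ) ^ (1/p:ℝ)) ^ (M:ℕ) = ((2:ℝ) ^ (M:ℕ)) ^ (1/p:ℝ) := by
      rw [← Real.rpow_natCast ((2:ℝ)^(1/p:ℝ)) M, ← Real.rpow_mul (by norm_num : (0:ℝ) ≤ 2),
        ← Real.rpow_natCast (2:ℝ) M, ← Real.rpow_mul (by norm_num : (0:ℝ) ≤ 2), mul_comm]
    have h5 : ((2:ℝ) ^ (1/p:ℝ)) ^ (M:ℕ) ≤ α ^ (M:ℕ) := by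
      rw [h4]
      exact h3.trans_eq hαM.symm
    exact le_of_pow_le_pow_left₀ (by omega : M ≠ 0) hα.le h5
  have hlog2 : (0.6931471803:ℝ) < Real.log 2 := Real.log_two_gt_d9
  have hexp2 : ∀ u : ℝ, 0 < u → Real.log 2 * u + 1 ≤ (2:ℝ) ^ (u:ℝ) := by
    intro u hu
    rw [Real.rpow_def_of_pos (by norm_num : (0:ℝ) < 2)]
    linarith [Real.add_one_le_exp (Real.log 2 * u)]
  have hsum1 : (∑ m ∈ Finset.Icc 1 M, α ^ (-(m:ℝ))) ≤ 2*p := by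
    have hβ : ∀ m : ℕ, α ^ (-(m:ℝ)) = (α⁻¹) ^ m := by
      intro m
      rw [Real.rpow_neg hα.le, Real.rpow_natCast, inv_pow]
    rw [Finset.sum_congr rfl fun m _ => hβ m]
    have hβ0 : (0:ℝ) ≤ α⁻¹ := by positivity
    have hβ1 : α⁻¹ < 1 := inv_lt_one_of_one_lt₀ hα1
    have hins : Finset.range (M+1) = insert 0 (Finset.Icc 1 M) := by
      ext i
      simp only [Finset.mem_range, Finset.mem_insert, Finset.mem_Icc]
      omega
    have hzero : (0:ℕ) ∉ Finset.Icc 1 M := by simp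
    have htot : ∑ i ∈ Finset.range (M+1), (α⁻¹)^i
        = 1 + ∑ m ∈ Finset.Icc 1 M, (α⁻¹)^m := by
      rw [hins, Finset.sum_insert hzero, pow_zero]
    have hgeom := geom_bound hβ0 hβ1 (M+1)
    have h7 : ∑ m ∈ Finset.Icc 1 M, (α⁻¹)^m ≤ 1/(1-α⁻¹) - 1 := by
      rw [htot] at hgeom
      linarith
    have h8 : 1/(1-α⁻¹) - 1 = 1/(α-1) := by
      have h1 : 1 - α⁻¹ = (α-1)/α := by field_simp
      rw [h1, one_div_div, div_sub_one (by linarith : α - 1 ≠ 0)]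
      congr 1
      ring
    have hlog : Real.log 2 / p ≤ α - 1 := by
      have h10 := hexp2 (1/p) (by positivity)
      have h11 : Real.log 2 * (1/p) = Real.log 2 / p := by ring
      linarith [hα2]
    have hα1' : (0:ℝ) < α - 1 := by linarith
    have h11 : 1/(α-1) ≤ p / Real.log 2 := by
      rw [div_le_div_iff₀ hα1' (by linarith)]
      have h13 := mul_le_mul_of_nonneg_left hlog hp0.le
      have heq : p * (Real.log 2 / p) = Real.log 2 := by field_simp
      linarith
    have h12 : p / Real.log 2 ≤ 2*p := by
      rw [div_le_iff₀ (by linarith)]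
      nlinarith [hp0.le, hlog2]
    rw [h8] at h7
    linarith
  have hsum2 : (∑ m ∈ Finset.range M, α ^ (-(m:ℝ)*(p-1))) ≤ 1 + 2*q := by
    set δ : ℝ := α ^ ((p-1):ℝ) with hδ
    have hδ1 : 1 < δ := (Real.one_lt_rpow_iff_of_pos hα).mpr (Or.inl ⟨hα1, by linarith⟩)
    have hδ0 : (0:ℝ) < δ := lt_trans one_pos hδ1
    have hterm : ∀ m : ℕ, α ^ (-(m:ℝ)*(p-1)) = (δ⁻¹) ^ m := by
      intro m
      rw [inv_pow, ← Real.rpow_natCast δ m, hδ, ← Real.rpow_mul hα.le,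
        ← Real.rpow_neg hα.le]
      congr 1
      ring
    rw [Finset.sum_congr rfl fun m _ => hterm m]
    have hβ0 : (0:ℝ) ≤ δ⁻¹ := by positivity
    have hβ1 : δ⁻¹ < 1 := inv_lt_one_of_one_lt₀ hδ1
    have hgeom := geom_bound hβ0 hβ1 M
    have h8 : 1/(1-δ⁻¹) = 1 + 1/(δ-1) := by
      have hδne : δ - 1 ≠ 0 := by linarith
      have h1 : 1 - δ⁻¹ = (δ-1)/δ := by field_simp
      rw [h1, one_div_div]
      have h2 : δ/(δ-1) = ((δ-1) + 1)/(δ-1) := by congr 1; ring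
      rw [h2, add_div, div_self hδne]
    -- δ ≥ 2^{1/q}
    have hδ2 : (2:ℝ) ^ (1/q:ℝ) ≤ δ := by
      have h1 : ((2:ℝ) ^ (1/p:ℝ)) ^ ((p-1):ℝ) ≤ α ^ ((p-1):ℝ) :=
        Real.rpow_le_rpow (by positivity) hα2 (by linarith)
      have h2 : ((2:ℝ) ^ (1/p:ℝ)) ^ ((p-1):ℝ) = (2:ℝ) ^ (1/q:ℝ) := by
        rw [← Real.rpow_mul (by norm_num : (0:ℝ) ≤ 2)]
        congr 1
        have h5 : 1/q = 1 - 1/p := by linarith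
        rw [h5]
        field_simp
      rw [← h2]
      exact h1
    have hlogq : Real.log 2 / q ≤ δ - 1 := by
      have h10 := hexp2 (1/q) (by positivity)
      have h11 : Real.log 2 * (1/q) = Real.log 2 / q := by ring
      linarith [hδ2]
    have hδ1' : (0:ℝ) < δ - 1 := by linarith
    have h11 : 1/(δ-1) ≤ q / Real.log 2 := by
      rw [div_le_div_iff₀ hδ1' (by linarith)]
      have h13 := mul_le_mul_of_nonneg_left hlogq hq0.le
      have heq : q * (Real.log 2 / q) = Real.log 2 := by field_simp
      linarith
    have h12 : q / Real.log 2 ≤ 2*q := by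
      rw [div_le_iff₀ (by linarith)]
      nlinarith [hq0.le, hlog2]
    calc ∑ m ∈ Finset.range M, (δ⁻¹)^m ≤ 1/(1-δ⁻¹) := hgeom
      _ = 1 + 1/(δ-1) := h8
      _ ≤ 1 + 2*q := by linarith
  exact ⟨hfirst, by linarith⟩
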